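/- arXiv:1804.05829 — 3 statements merged into one kernel-verified Lean document; each statement's English description precedes it below -/
import Mathlib

section
/- Let n and d be integers with 0 < d ≤ ⌊(n−1)/2⌋. If G is a nonhamiltonian simple graph on n vertices with minimum degree δ(G) ≥ d, then e(G) ≤ max{ h(n,d,0), h(n, ⌊(n−1)/2⌋, 0) }. -/
open SimpleGraph

/-- A linear forest: an acyclic graph with maximum degree at most 2. -/
def SimpleGraph.IsLinearForest {V : Type*} (F : SimpleGraph V) : Prop :=
  F.IsAcyclic ∧ ∀ v a b c : V, F.Adj v a → F.Adj v b → F.Adj v c → a = b ∨ a = c ∨ b = c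

/-- A graph is `ℓ`-hamiltonian if every linear forest with `ℓ` edges contained in it
extends to a hamiltonian cycle. -/
def SimpleGraph.IsLHamiltonian {V : Type*} [DecidableEq V] (G : SimpleGraph V) (ℓ : ℕ) : Prop :=
  ∀ F : SimpleGraph V, F ≤ G → F.IsLinearForest → F.edgeSet.ncard = ℓ →
    ∃ (v : V) (c : G.Walk v v), c.IsHamiltonianCycle ∧ ∀ e ∈ F.edgeSet, e ∈ c.edges

/-- The graph `H_{n,d,ℓ}`: a complete graph on `A = {0, …, n-d+ℓ-1}` together with `d-ℓ`
further vertices, each adjacent to the set `B = {0, …, d-1} ⊆ A`. -/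
def Hgraph (n d ℓ : ℕ) : SimpleGraph (Fin n) where
  Adj u v := u ≠ v ∧ ((u.val < n - d + ℓ ∧ v.val < n - d + ℓ) ∨
    (u.val < d ∧ n - d + ℓ ≤ v.val) ∨ (v.val < d ∧ n - d + ℓ ≤ u.val))
  symm := ⟨by intro u v h; exact ⟨h.1.symm, by tauto⟩⟩
  loopless := ⟨by intro v h; exact h.1 rfl⟩

/-- The graph `H'_{n,d,ℓ}`: a complete graph on `{0, …, n-d+ℓ-1}` and a complete graph on
`{n-d-1, …, n-1}` sharing `ℓ+1` vertices. -/
def H'graph (n d ℓ : ℕ) : SimpleGraph (Fin n) where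
  Adj u v := u ≠ v ∧ ((u.val < n - d + ℓ ∧ v.val < n - d + ℓ) ∨
    (n - d - 1 ≤ u.val ∧ n - d - 1 ≤ v.val))
  symm := ⟨by intro u v h; exact ⟨h.1.symm, by tauto⟩⟩
  loopless := ⟨by intro v h; exact h.1 rfl⟩

/-- `h_r(n,d,ℓ) = C(n-d+ℓ, r) + (d-ℓ) C(d, r-1)`. -/
def hrfun (n d r ℓ : ℕ) : ℕ := Nat.choose (n - d + ℓ) r + (d - ℓ) * Nat.choose d (r - 1)

/-- `h(n,d,ℓ) = C(n-d+ℓ, 2) + (d-ℓ) d`. -/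
def hfun (n d ℓ : ℕ) : ℕ := Nat.choose (n - d + ℓ) 2 + (d - ℓ) * d

/-- The number of `r`-cliques of `G`. -/
noncomputable def cliqueCount {V : Type*} (G : SimpleGraph V) (r : ℕ) : ℕ :=
  {s : Finset V | G.IsNClique r s}.ncard

/-- `G` is `ℓ`-saturated: not `ℓ`-hamiltonian, but adding any edge makes it `ℓ`-hamiltonian. -/
def SimpleGraph.IsLSaturated {V : Type*} [DecidableEq V] (G : SimpleGraph V) (ℓ : ℕ) : Prop :=
  ¬ G.IsLHamiltonian ℓ ∧
    ∀ u v : V, u ≠ v → ¬ G.Adj u v → (G ⊔ SimpleGraph.edge u v).IsLHamiltonian ℓ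

section EBaux
open Finset
variable {V : Type*} {G : SimpleGraph V}

lemma EB.support_getElem? {u v : V} (P : G.Walk u v) : ∀ {i : ℕ}, i ≤ P.length →
    P.support[i]? = some (P.getVert i) := by
  induction P with
  | nil => intro i hi; simp at hi; subst hi; simp [Walk.getVert]
  | cons h q ih =>
    intro i hi
    match i with
    | 0 => simp
    | (j+1) =>
      simp only [Walk.support_cons, List.getElem?_cons_succ, Walk.getVert_cons_succ]
      exact ih (by simpa [Nat.succ_le_succ_iff] using hi)

lemma EB.getVert_inj {u v : V} {P : G.Walk u v} (hP : P.IsPath) {i j : ℕ}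
    (hi : i ≤ P.length) (hj : j ≤ P.length) (h : P.getVert i = P.getVert j) : i = j := by
  have h1 := EB.support_getElem? P hi
  have h2 := EB.support_getElem? P hj
  have hn := hP.support_nodup
  have hil : i < P.support.length := by rw [Walk.length_support]; omega
  have hjl : j < P.support.length := by rw [Walk.length_support]; omega
  rw [List.getElem?_eq_getElem hil] at h1
  rw [List.getElem?_eq_getElem hjl] at h2
  exact hn.getElem_inj_iff.mp (by
    rw [Option.some_inj] at h1 h2; rw [h1, h2, h])

lemma EB.first_edge {u v x : V} {P : G.Walk u v} (hP : P.IsPath)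
    (he : s(u, x) ∈ P.edges) : x = P.getVert 1 := by
  cases P with
  | nil => simp at he
  | cons h q =>
    rw [Walk.edges_cons, List.mem_cons] at he
    rcases he with he | he
    · have := Sym2.congr_right.mp he
      simpa [Walk.getVert_cons_succ, Walk.getVert_zero] using this
    · exact absurd (q.fst_mem_support_of_mem_edges he)
        ((Walk.cons_isPath_iff h q).mp hP).2

lemma EB.split {u v : V} (P : G.Walk u v) : ∀ (i : ℕ), i < P.length →
    ∃ (y x : V) (P₁ : G.Walk u y) (P₂ : G.Walk x v) (h : G.Adj y x),
      P = P₁.append (Walk.cons h P₂) ∧ P₁.length = i := by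
  induction P with
  | nil => intro i hi; simp at hi
  | @cons a b c h q ih =>
    intro i hi
    match i with
    | 0 =>
      exact ⟨a, b, Walk.nil, q, h, by simp, rfl⟩
    | (j+1) =>
      obtain ⟨y, x, P₁, P₂, had, heq, hlen⟩ := ih j (by simpa [Nat.succ_lt_succ_iff] using hi)
      exact ⟨y, x, Walk.cons h P₁, P₂, had, by rw [Walk.cons_append, heq], by simp [hlen]⟩

lemma EB.getVert_of_split {u v y x : V} {P : G.Walk u v} {P₁ : G.Walk u y} {P₂ : G.Walk x v}
    {h : G.Adj y x} (heq : P = P₁.append (Walk.cons h P₂)) {i : ℕ} (hlen : P₁.length = i) :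
    P.getVert i = y ∧ P.getVert (i+1) = x := by
  subst heq hlen
  constructor
  · rw [Walk.getVert_append]
    simp
  · rw [Walk.getVert_append]
    simp [Walk.getVert_cons_succ]

lemma EB.crossover [DecidableEq V] {u v : V} {P : G.Walk u v} (hP : P.IsPath)
    (hsup : ∀ w, w ∈ P.support) (huv : ¬ G.Adj u v) {j : ℕ} (hj1 : 1 ≤ j)
    (hj2 : j + 1 < P.length) (hux : G.Adj u (P.getVert (j+1))) (hvy : G.Adj v (P.getVert j)) :
    ∃ c : G.Walk u u, c.IsHamiltonianCycle := by
  obtain ⟨y, x, P₁, P₂, hadj, heq, hlen⟩ := EB.split P j (by omega)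
  obtain ⟨hy, hx⟩ := EB.getVert_of_split heq hlen
  rw [hx] at hux
  rw [hy] at hvy
  have huv' : u ≠ v := by
    rintro rfl
    have : (0 : ℕ) = P.length := EB.getVert_inj hP (by omega) le_rfl (by
      rw [Walk.getVert_zero, Walk.getVert_length])
    omega
  have hs : P.support = P₁.support ++ P₂.support := by
    rw [heq, Walk.support_append, Walk.support_cons, List.tail_cons]
  set Q : G.Walk x u := P₂.append (Walk.cons hvy P₁.reverse) with hQ
  have hQsup : Q.support = P₂.support ++ P₁.support.reverse := by
    rw [hQ, Walk.support_append, Walk.support_cons, List.tail_cons, Walk.support_reverse]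
  have hperm : List.Perm Q.support P.support := by
    rw [hQsup, hs]
    exact (List.Perm.append_left _ (List.reverse_perm _)).trans List.perm_append_comm
  have hQnodup : Q.support.Nodup := hperm.nodup_iff.mpr hP.support_nodup
  have hQpath : Q.IsPath := Walk.IsPath.mk' hQnodup
  have hPedge : s(u, x) ∉ P.edges := by
    intro hmem
    have h1 : x = P.getVert 1 := EB.first_edge hP hmem
    have : j + 1 = 1 := EB.getVert_inj hP (by omega) (by omega) (by rw [hx, ← h1])
    omega
  have hedge : s(u, x) ∉ Q.edges := by
    intro hmem
    rw [hQ, Walk.edges_append, Walk.edges_cons, List.mem_append, List.mem_cons] at hmem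
    have hPed : P.edges = P₁.edges ++ (s(y, x) :: P₂.edges) := by
      rw [heq, Walk.edges_append, Walk.edges_cons]
    rcases hmem with h2 | h2 | h2
    · exact hPedge (by rw [hPed]; simp [h2])
    · rw [Sym2.eq_iff] at h2
      rcases h2 with ⟨rfl, rfl⟩ | ⟨rfl, rfl⟩
      · exact huv' rfl
      · have : j = 0 := EB.getVert_inj hP (by omega) (by omega) (by
          rw [hy, Walk.getVert_zero])
        omega
    · rw [Walk.edges_reverse, List.mem_reverse] at h2
      exact hPedge (by rw [hPed]; simp [h2])
  refine ⟨Walk.cons hux Q, ?_⟩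
  rw [Walk.isHamiltonianCycle_iff_isCycle_and_support_count_tail_eq_one]
  constructor
  · exact (Walk.cons_isCycle_iff Q hux).mpr ⟨hQpath, hedge⟩
  · intro a
    rw [Walk.support_cons, List.tail_cons]
    exact List.count_eq_one_of_mem hQnodup (hperm.mem_iff.mpr (hsup a))

lemma EB.ore_path [Fintype V] [DecidableEq V] {u v : V} {P : G.Walk u v} (hP : P.IsPath)
    (hsup : ∀ w, w ∈ P.support) (huv : ¬ G.Adj u v)
    (hnoham : ¬ ∃ (a : V) (c : G.Walk a a), c.IsHamiltonianCycle) :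
    (G.neighborSet u).ncard + (G.neighborSet v).ncard ≤ Fintype.card V - 1 := by
  classical
  set m := P.length with hm
  set A : Finset ℕ := (Finset.Icc 1 m).filter (fun i => G.Adj u (P.getVert i)) with hA
  set B : Finset ℕ := (Finset.Icc 1 m).filter (fun i => G.Adj v (P.getVert (i-1))) with hB
  have hmemA : ∀ i, i ∈ A ↔ (1 ≤ i ∧ i ≤ m) ∧ G.Adj u (P.getVert i) := by
    intro i; rw [hA, Finset.mem_filter, Finset.mem_Icc]
  have hmemB : ∀ i, i ∈ B ↔ (1 ≤ i ∧ i ≤ m) ∧ G.Adj v (P.getVert (i-1)) := by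
    intro i; rw [hB, Finset.mem_filter, Finset.mem_Icc]
  have hAcard : (G.neighborSet u).ncard = A.card := by
    have himg : G.neighborSet u = P.getVert '' (A : Set ℕ) := by
      ext w
      simp only [mem_neighborSet, Set.mem_image, Finset.mem_coe]
      constructor
      · intro hw
        obtain ⟨i, hiw, him⟩ := Walk.mem_support_iff_exists_getVert.mp (hsup w)
        have hi0 : i ≠ 0 := by
          rintro rfl
          rw [Walk.getVert_zero] at hiw
          exact G.irrefl (hiw ▸ hw)
        exact ⟨i, (hmemA i).mpr ⟨⟨by omega, him⟩, by rwa [hiw]⟩, hiw⟩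
      · rintro ⟨i, hi, rfl⟩
        exact ((hmemA i).mp hi).2
    rw [himg, Set.ncard_image_of_injOn, Set.ncard_coe_finset]
    intro i hi j hj hij
    rw [Finset.mem_coe, hmemA] at hi hj
    exact EB.getVert_inj hP hi.1.2 hj.1.2 hij
  have hBcard : (G.neighborSet v).ncard = B.card := by
    have himg : G.neighborSet v = (fun i => P.getVert (i-1)) '' (B : Set ℕ) := by
      ext w
      simp only [mem_neighborSet, Set.mem_image, Finset.mem_coe]
      constructor
      · intro hw
        obtain ⟨i, hiw, him⟩ := Walk.mem_support_iff_exists_getVert.mp (hsup w)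
        have him' : i ≠ m := by
          rintro rfl
          rw [hm, Walk.getVert_length] at hiw
          exact G.irrefl (hiw ▸ hw)
        exact ⟨i+1, (hmemB (i+1)).mpr ⟨⟨by omega, by omega⟩,
          by simpa [Nat.add_sub_cancel, hiw]⟩, by simpa [Nat.add_sub_cancel, hiw]⟩
      · rintro ⟨i, hi, rfl⟩
        exact ((hmemB i).mp hi).2
    rw [himg, Set.ncard_image_of_injOn, Set.ncard_coe_finset]
    intro i hi j hj hij
    rw [Finset.mem_coe, hmemB] at hi hj
    have := EB.getVert_inj hP (i := i - 1) (j := j - 1) (by omega) (by omega) hij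
    omega
  have hdisj : Disjoint A B := by
    rw [Finset.disjoint_left]
    intro i hiA hiB
    obtain ⟨⟨hi1, him⟩, hu⟩ := (hmemA i).mp hiA
    obtain ⟨_, hv⟩ := (hmemB i).mp hiB
    have hine : i ≠ m := by
      rintro rfl
      rw [hm, Walk.getVert_length] at hu
      exact huv hu
    have hi1' : i ≠ 1 := by
      rintro rfl
      simp only [Nat.sub_self, Walk.getVert_zero] at hv
      exact huv hv.symm
    have := EB.crossover hP hsup huv (j := i - 1) (by omega) (by omega)
      (by rwa [Nat.sub_add_cancel hi1]) hv
    exact hnoham ⟨u, this⟩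
  have hunion : A.card + B.card ≤ m := by
    rw [← Finset.card_union_of_disjoint hdisj]
    calc (A ∪ B).card ≤ (Finset.Icc 1 m).card := Finset.card_le_card (by
          rw [hA, hB]
          exact Finset.union_subset (Finset.filter_subset _ _) (Finset.filter_subset _ _))
      _ = m := by rw [Nat.card_Icc]; omega
  have hmn : m + 1 ≤ Fintype.card V := by
    have := hP.support_nodup.length_le_card
    rwa [Walk.length_support] at this
  omega

lemma EB.ham_path_of_cycle [DecidableEq V] {u v : V} (hne : v ≠ u) {c : G.Walk u u}
    (hc : c.IsHamiltonianCycle) (he : s(u, v) ∈ c.edges) :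
    ∃ q : G.Walk v u, q.IsPath ∧ (∀ w, w ∈ q.support) ∧ s(u, v) ∉ q.edges := by
  cases c with
  | nil => exact absurd rfl hc.isCycle.ne_nil
  | @cons _ b _ hb q =>
    obtain ⟨hqpath, hqe⟩ := (Walk.cons_isCycle_iff q hb).mp hc.isCycle
    have hsupq : ∀ w, w ∈ q.support := by
      intro w
      have := hc.mem_support w
      rw [Walk.support_cons, List.mem_cons] at this
      rcases this with rfl | h
      · exact q.end_mem_support
      · exact h
    by_cases hvb : v = b
    · subst hvb
      exact ⟨q, hqpath, hsupq, hqe⟩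
    · have he' : s(u, v) ∈ q.edges := by
        rw [Walk.edges_cons, List.mem_cons] at he
        rcases he with h | h
        · rw [Sym2.congr_right] at h; exact absurd h hvb
        · exact h
      set r : G.Walk u b := q.reverse with hr
      have hrpath : r.IsPath := hqpath.reverse
      have hre : s(u, v) ∈ r.edges := by rw [hr, Walk.edges_reverse, List.mem_reverse]; exact he'
      have h1 : v = r.getVert 1 := EB.first_edge hrpath hre
      have hrnil : ¬ r.Nil := Walk.not_nil_of_ne hb.ne
      have hrec : Walk.cons (r.adj_snd hrnil) r.tail = r := Walk.cons_tail_eq r hrnil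
      have hredges : r.edges = s(u, r.getVert 1) :: r.tail.edges := by
        conv_lhs => rw [← hrec]
        rw [Walk.edges_cons]
      have htailedges : s(u, v) ∉ r.tail.edges := by
        intro hmem
        have hnodup := hrpath.isTrail.edges_nodup
        rw [hredges, List.nodup_cons] at hnodup
        exact hnodup.1 (h1 ▸ hmem)
      have hsupr : r.support = u :: r.tail.support := by
        rw [Walk.support_tail_of_not_nil r hrnil, ← Walk.support_eq_cons]
      set q2 : G.Walk v b := r.tail.copy h1.symm rfl with hq2
      have hq2sup : q2.support = r.tail.support := by rw [hq2, Walk.support_copy]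
      have hq2edges : q2.edges = r.tail.edges := by rw [hq2, Walk.edges_copy]
      refine ⟨q2.concat hb.symm, ?_, ?_, ?_⟩
      · have hrnodup := hrpath.support_nodup
        rw [hsupr, List.nodup_cons] at hrnodup
        rw [Walk.isPath_def, Walk.support_concat, hq2sup]
        refine List.Nodup.append hrnodup.2 (List.nodup_singleton u) ?_
        intro a ha hb
        rw [List.mem_singleton] at hb
        subst hb
        exact hrnodup.1 ha
      · intro w
        rw [Walk.support_concat, List.mem_append, hq2sup]
        by_cases hw : w = u
        · right; simp [hw]
        · left
          have := hsupq w
          have : w ∈ r.support := by rw [hr, Walk.support_reverse, List.mem_reverse]; exact this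
          rw [hsupr, List.mem_cons] at this
          rcases this with h | h
          · exact absurd h hw
          · exact h
      · rw [Walk.edges_concat, hq2edges, List.concat_eq_append, List.mem_append]
        rintro (h | h)
        · exact htailedges h
        · rw [List.mem_singleton, Sym2.eq_iff] at h
          rcases h with ⟨h1', h2'⟩ | ⟨h1', h2'⟩
          · exact hb.ne h1'
          · exact hvb h2'

lemma EB.transfer_hamCycle [DecidableEq V] {H : SimpleGraph V} {a : V} {c : H.Walk a a}
    (hc : c.IsHamiltonianCycle) (hsub : ∀ e ∈ c.edges, e ∈ G.edgeSet) :
    (c.transfer G hsub).IsHamiltonianCycle := by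
  rw [Walk.isHamiltonianCycle_iff_isCycle_and_support_count_tail_eq_one]
  refine ⟨hc.isCycle.transfer hsub, fun w => ?_⟩
  rw [Walk.support_transfer]
  rw [Walk.isHamiltonianCycle_iff_isCycle_and_support_count_tail_eq_one] at hc
  exact hc.2 w

lemma EB.rotate_hamCycle [DecidableEq V] {a u : V} {c : G.Walk a a}
    (hc : c.IsHamiltonianCycle) (hu : u ∈ c.support) :
    (c.rotate u hu).IsHamiltonianCycle := by
  rw [Walk.isHamiltonianCycle_iff_isCycle_and_support_count_tail_eq_one]
  refine ⟨hc.isCycle.rotate hu, fun w => ?_⟩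
  rw [((Walk.support_rotate c u hu).perm).count_eq]
  rw [Walk.isHamiltonianCycle_iff_isCycle_and_support_count_tail_eq_one] at hc
  exact hc.2 w

lemma EB.ham_path_of_sat [Fintype V] [DecidableEq V]
    (hnoham : ¬ ∃ (a : V) (c : G.Walk a a), c.IsHamiltonianCycle) {u v : V}
    (hne : u ≠ v) (hnadj : ¬ G.Adj u v) (hsat : (G ⊔ SimpleGraph.edge u v).IsHamiltonian) :
    ∃ P : G.Walk u v, P.IsPath ∧ ∀ w, w ∈ P.support := by
  have hcard : Fintype.card V ≠ 1 := by
    intro h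
    rw [Fintype.card_eq_one_iff] at h
    obtain ⟨x, hx⟩ := h
    exact hne ((hx u).trans (hx v).symm)
  obtain ⟨a, c, hc⟩ := hsat hcard
  have hedges : (G ⊔ SimpleGraph.edge u v).edgeSet = G.edgeSet ∪ {s(u, v)} := by
    rw [edgeSet_sup, edge_edgeSet_of_ne hne]
  by_cases he : s(u, v) ∈ c.edges
  · have hu : u ∈ c.support := hc.mem_support u
    set c2 := c.rotate u hu with hc2
    have hc2ham := EB.rotate_hamCycle hc hu
    have he2 : s(u, v) ∈ c2.edges := (Walk.rotate_edges c u hu).perm.mem_iff.mpr he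
    obtain ⟨q, hqpath, hqsup, hqe⟩ := EB.ham_path_of_cycle hne.symm hc2ham he2
    have hsub : ∀ e ∈ q.edges, e ∈ G.edgeSet := by
      intro e hee
      have := q.edges_subset_edgeSet hee
      rw [hedges] at this
      rcases this with h | h
      · exact h
      · rw [Set.mem_singleton_iff] at h
        exact absurd (h ▸ hee) hqe
    refine ⟨(q.transfer G hsub).reverse, (hqpath.transfer hsub).reverse, fun w => ?_⟩
    rw [Walk.support_reverse, List.mem_reverse, Walk.support_transfer]
    exact hqsup w
  · have hsub : ∀ e ∈ c.edges, e ∈ G.edgeSet := by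
      intro e hee
      have := c.edges_subset_edgeSet hee
      rw [hedges] at this
      rcases this with h | h
      · exact h
      · rw [Set.mem_singleton_iff] at h
        exact absurd (h ▸ hee) he
    exact absurd ⟨a, c.transfer G hsub, EB.transfer_hamCycle hc hsub⟩ hnoham

lemma EB.walk_of_list (hc : ∀ x y : V, x ≠ y → G.Adj x y) :
    ∀ (l : List V) (x y : V), (x :: (l ++ [y])).Nodup →
      ∃ w : G.Walk x y, w.support = x :: (l ++ [y]) := by
  intro l
  induction l with
  | nil =>
    intro x y hnd
    simp only [List.nil_append, List.nodup_cons, List.mem_singleton] at hnd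
    exact ⟨Walk.cons (hc x y hnd.1) Walk.nil, by simp⟩
  | cons a l ih =>
    intro x y hnd
    have hxa : x ≠ a := by
      simp only [List.cons_append, List.nodup_cons, List.mem_cons] at hnd
      exact fun h => hnd.1 (Or.inl h)
    have hnd' : (a :: (l ++ [y])).Nodup := by
      rw [List.cons_append, List.nodup_cons] at hnd
      exact hnd.2
    obtain ⟨w, hw⟩ := ih a y hnd'
    exact ⟨Walk.cons (hc x a hxa) w, by simp [hw]⟩

lemma EB.complete_ham [Fintype V] [DecidableEq V] (h3 : 3 ≤ Fintype.card V)
    (hc : ∀ x y : V, x ≠ y → G.Adj x y) :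
    ∃ (a : V) (c : G.Walk a a), c.IsHamiltonianCycle := by
  have hlen : (Finset.univ : Finset V).toList.length = Fintype.card V := by
    rw [Finset.length_toList, Finset.card_univ]
  have hnod : (Finset.univ : Finset V).toList.Nodup := Finset.nodup_toList _
  have hmem : ∀ w : V, w ∈ (Finset.univ : Finset V).toList := by
    intro w; rw [Finset.mem_toList]; exact Finset.mem_univ w
  obtain ⟨x, t, ht⟩ : ∃ x t, (Finset.univ : Finset V).toList = x :: t := by
    cases h : (Finset.univ : Finset V).toList with
    | nil => rw [h] at hlen; simp at hlen; omega
    | cons x t => exact ⟨x, t, rfl⟩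
  obtain ⟨a, t2, ht2⟩ : ∃ a t2, t = a :: t2 := by
    cases h : t with
    | nil => rw [h] at ht; rw [ht] at hlen; simp at hlen; omega
    | cons a t2 => exact ⟨a, t2, rfl⟩
  rw [ht2] at ht
  rw [ht] at hnod hmem hlen
  simp only [List.length_cons] at hlen
  have ht2len : 1 ≤ t2.length := by omega
  simp only [List.nodup_cons, List.mem_cons] at hnod
  have hxa : x ≠ a := fun h => hnod.1 (Or.inl h)
  have hxt2 : x ∉ t2 := fun h => hnod.1 (Or.inr h)
  have hat2 : a ∉ t2 := hnod.2.1
  have ht2nd : t2.Nodup := hnod.2.2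
  have hnd : (a :: (t2 ++ [x])).Nodup := by
    simp only [List.nodup_cons, List.mem_append, List.mem_singleton]
    refine ⟨by tauto, ?_⟩
    rw [List.nodup_append]
    exact ⟨ht2nd, List.nodup_singleton x, fun b hb c hc hbc => by subst hbc; exact hxt2 ((List.mem_singleton.mp hc) ▸ hb)⟩
  obtain ⟨w, hw⟩ := EB.walk_of_list hc t2 a x hnd
  have hwpath : w.IsPath := Walk.IsPath.mk' (hw ▸ hnd)
  have hwlen : w.length = t2.length + 1 := by
    have := congrArg List.length hw
    rw [Walk.length_support] at this
    simp at this
    omega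
  refine ⟨x, Walk.cons (hc x a hxa) w, ?_⟩
  rw [Walk.isHamiltonianCycle_iff_isCycle_and_support_count_tail_eq_one]
  constructor
  · rw [Walk.cons_isCycle_iff]
    refine ⟨hwpath, fun hmem' => ?_⟩
    have hre : s(x, a) ∈ w.reverse.edges := by rw [Walk.edges_reverse, List.mem_reverse]; exact hmem'
    have h1 : a = w.reverse.getVert 1 := EB.first_edge hwpath.reverse hre
    have hrs : w.reverse.support = x :: (t2.reverse ++ [a]) := by
      rw [Walk.support_reverse, hw]
      simp
    have hgl := EB.support_getElem? w.reverse (i := 1) (by rw [Walk.length_reverse]; omega)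
    rw [hrs] at hgl
    simp only [List.getElem?_cons_succ] at hgl
    rw [List.getElem?_append, if_pos (by rw [List.length_reverse]; omega)] at hgl
    have : w.reverse.getVert 1 ∈ t2.reverse := by
      have hlt : 0 < t2.reverse.length := by rw [List.length_reverse]; omega
      rw [List.getElem?_eq_getElem hlt, Option.some_inj] at hgl
      rw [← hgl]
      exact List.getElem_mem hlt
    rw [← h1, List.mem_reverse] at this
    exact hat2 this
  · intro b
    rw [Walk.support_cons, List.tail_cons, hw]
    refine List.count_eq_one_of_mem hnd ?_
    have := hmem b
    simp only [List.mem_cons] at this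
    simp only [List.mem_cons, List.mem_append, List.mem_singleton]
    tauto

lemma EB.two_choose (m : ℕ) : 2 * Nat.choose m 2 = m * (m - 1) := by
  cases m with
  | zero => simp
  | succ k =>
    have he : Even ((k + 1) * k) := by
      simpa [Nat.mul_comm] using Nat.even_mul_succ_self k
    rw [Nat.choose_two_right, Nat.succ_sub_one, Nat.mul_div_cancel' he.two_dvd]

lemma EB.hfun_eq (n k : ℕ) : hfun n k 0 = Nat.choose (n - k) 2 + k * k := by
  simp [hfun]

lemma EB.two_hfun (n k : ℕ) (h : 2 * k + 1 ≤ n) :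
    2 * hfun n k 0 = (n - k) * (n - k - 1) + 2 * (k * k) := by
  rw [EB.hfun_eq, Nat.mul_add, EB.two_choose]

lemma EB.step (n k : ℕ) (h : k + 1 ≤ (n - 1) / 2) :
    (n ≤ 3 * k + 2 → hfun n k 0 ≤ hfun n (k + 1) 0) ∧
    (3 * k + 2 ≤ n → hfun n (k + 1) 0 ≤ hfun n k 0) := by
  have hn : 2 * (k + 1) + 1 ≤ n := by omega
  obtain ⟨a, rfl⟩ : ∃ a, n = k + 2 + a := ⟨n - k - 2, by omega⟩
  have h1 := EB.two_hfun (k + 2 + a) k (by omega)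
  have h2 := EB.two_hfun (k + 2 + a) (k + 1) (by omega)
  have e1 : k + 2 + a - k = a + 2 := by omega
  have e2 : k + 2 + a - k - 1 = a + 1 := by omega
  have e3 : k + 2 + a - (k + 1) = a + 1 := by omega
  have e4 : k + 2 + a - (k + 1) - 1 = a := by omega
  rw [e2, e1] at h1
  rw [e4, e3] at h2
  constructor <;> intro hc
  · have ha : a ≤ 2 * k := by omega
    have : 2 * hfun (k + 2 + a) k 0 ≤ 2 * hfun (k + 2 + a) (k + 1) 0 := by
      rw [h1, h2]; nlinarith
    omega
  · have ha : 2 * k ≤ a := by omega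
    have : 2 * hfun (k + 2 + a) (k + 1) 0 ≤ 2 * hfun (k + 2 + a) k 0 := by
      rw [h1, h2]; nlinarith
    omega

lemma EB.up (n : ℕ) : ∀ t k, n ≤ 3 * k + 2 → k + t ≤ (n - 1) / 2 →
    hfun n k 0 ≤ hfun n (k + t) 0 := by
  intro t
  induction t with
  | zero => intro k _ _; simp
  | succ t ih =>
    intro k hk hm
    calc hfun n k 0 ≤ hfun n (k + t) 0 := ih k hk (by omega)
      _ ≤ hfun n (k + t + 1) 0 := (EB.step n (k + t) (by omega)).1 (by omega)
      _ = hfun n (k + (t + 1)) 0 := by ring_nf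

lemma EB.down (n : ℕ) : ∀ t k, 3 * (k + t) + 2 ≤ n → k + t ≤ (n - 1) / 2 →
    hfun n (k + t) 0 ≤ hfun n k 0 := by
  intro t
  induction t with
  | zero => intro k _ _; simp
  | succ t ih =>
    intro k hk hm
    calc hfun n (k + (t + 1)) 0 = hfun n (k + t + 1) 0 := by ring_nf
      _ ≤ hfun n (k + t) 0 := (EB.step n (k + t) (by omega)).2 (by omega)
      _ ≤ hfun n k 0 := ih k (by omega) (by omega)

lemma EB.convex {n d k : ℕ} (h1 : d ≤ k) (h2 : k ≤ (n - 1) / 2) :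
    hfun n k 0 ≤ max (hfun n d 0) (hfun n ((n - 1) / 2) 0) := by
  by_cases hc : n ≤ 3 * k + 2
  · refine le_max_of_le_right ?_
    have := EB.up n ((n - 1) / 2 - k) k hc (by omega)
    rwa [Nat.add_sub_cancel' h2] at this
  · refine le_max_of_le_left ?_
    have := EB.down n (k - d) d (by omega) (by omega)
    rwa [Nat.add_sub_cancel' h1] at this

lemma EB.ncard_neighborSet [Fintype V] [DecidableRel G.Adj] (w : V) :
    (G.neighborSet w).ncard = G.degree w := by
  rw [show G.degree w = (G.neighborFinset w).card from rfl, ← Set.ncard_coe_finset,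
    neighborFinset_def, Set.coe_toFinset]

lemma EB.ncard_edgeSet [Fintype V] [DecidableEq V] [DecidableRel G.Adj] :
    G.edgeSet.ncard = G.edgeFinset.card := by
  rw [← Set.ncard_coe_finset G.edgeFinset, coe_edgeFinset]

lemma EB.sum_D [Fintype V] [DecidableEq V] :
    ∑ w : V, (G.neighborSet w).ncard = 2 * G.edgeSet.ncard := by
  classical
  calc ∑ w : V, (G.neighborSet w).ncard = ∑ w : V, G.degree w :=
        Finset.sum_congr rfl (fun w _ => EB.ncard_neighborSet w)
    _ = 2 * G.edgeFinset.card := G.sum_degrees_eq_twice_card_edges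
    _ = 2 * G.edgeSet.ncard := by rw [EB.ncard_edgeSet]

lemma EB.sat_core [Fintype V] [DecidableEq V] {d : ℕ}
    (hd0 : 0 < d) (hd : d ≤ (Fintype.card V - 1) / 2)
    (hmin : ∀ w, d ≤ (G.neighborSet w).ncard)
    {u v : V} (hne : u ≠ v) (hnadj : ¬ G.Adj u v)
    (hsum : (G.neighborSet u).ncard + (G.neighborSet v).ncard ≤ Fintype.card V - 1)
    (hle : (G.neighborSet u).ncard ≤ (G.neighborSet v).ncard)
    (hmax : ∀ x y : V, x ≠ y → ¬ G.Adj x y →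
      (G.neighborSet x).ncard + (G.neighborSet y).ncard ≤
        (G.neighborSet u).ncard + (G.neighborSet v).ncard) :
    G.edgeSet.ncard ≤
      max (hfun (Fintype.card V) d 0) (hfun (Fintype.card V) ((Fintype.card V - 1) / 2) 0) := by
  classical
  set n := Fintype.card V with hn
  set k := (G.neighborSet u).ncard with hk
  have hkd : d ≤ k := hmin u
  have hk2 : 2 * k ≤ n - 1 := by omega
  have hn3 : 3 ≤ n := by
    have h1 : 1 ≤ (n - 1) / 2 := le_trans hd0 hd
    omega
  have hDle : ∀ w, (G.neighborSet w).ncard ≤ n - 1 := by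
    intro w
    rw [EB.ncard_neighborSet, hn]
    have := G.degree_lt_card_verts w
    omega
  set S₀ : Finset V := univ.filter (fun w => w ≠ v ∧ ¬ G.Adj v w) with hS₀
  have hS₀mem : ∀ w, w ∈ S₀ ↔ w ≠ v ∧ ¬ G.Adj v w := by
    intro w; rw [hS₀, Finset.mem_filter]; simp
  have hS₀card : k ≤ S₀.card := by
    have hcompl : S₀ = (insert v (G.neighborFinset v))ᶜ := by
      ext w
      rw [hS₀mem, Finset.mem_compl, Finset.mem_insert, mem_neighborFinset, not_or]
    have hvnm : v ∉ G.neighborFinset v := by simp [mem_neighborFinset]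
    rw [hcompl, Finset.card_compl, Finset.card_insert_of_notMem hvnm]
    have hdv : (G.neighborFinset v).card = (G.neighborSet v).ncard :=
      (EB.ncard_neighborSet v).symm
    rw [hdv, ← hn]
    omega
  have hS₀deg : ∀ w ∈ S₀, (G.neighborSet w).ncard ≤ k := by
    intro w hw
    rw [hS₀mem] at hw
    have := hmax w v hw.1 (fun h => hw.2 h.symm)
    omega
  set R : Finset V := univ.filter (fun w => n - k ≤ (G.neighborSet w).ncard) with hR
  have hRmem : ∀ w, w ∈ R ↔ n - k ≤ (G.neighborSet w).ncard := by
    intro w; rw [hR, Finset.mem_filter]; simp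
  have hRsub : R ⊆ G.neighborFinset u := by
    intro w hw
    rw [hRmem] at hw
    rw [mem_neighborFinset]
    by_contra hadj
    by_cases hwu : w = u
    · subst hwu
      omega
    · have := hmax u w (fun h => hwu h.symm) hadj
      omega
  have hRcard : R.card ≤ k := by
    have := Finset.card_le_card hRsub
    have hdu : (G.neighborFinset u).card = k := (EB.ncard_neighborSet u).symm
    omega
  have hS₀Rc : S₀ ⊆ Rᶜ := by
    intro w hw
    rw [Finset.mem_compl, hRmem]
    have := hS₀deg w hw
    omega
  have hRc_deg : ∀ w ∈ Rᶜ, (G.neighborSet w).ncard ≤ n - k - 1 := by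
    intro w hw
    rw [Finset.mem_compl, hRmem] at hw
    omega
  have hRccard : n - k ≤ Rᶜ.card := by
    rw [Finset.card_compl, ← hn]
    omega
  obtain ⟨S, hSsub, hScard⟩ := Finset.exists_subset_card_eq hS₀card
  have hSRc : S ⊆ Rᶜ := hSsub.trans hS₀Rc
  obtain ⟨T, hST, hTRc, hTcard'⟩ := Finset.exists_subsuperset_card_eq hSRc
    (by omega) hRccard
  have hsplit : ∑ w : V, (G.neighborSet w).ncard =
      ∑ w ∈ S, (G.neighborSet w).ncard + ∑ w ∈ T \ S, (G.neighborSet w).ncard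
        + ∑ w ∈ Tᶜ, (G.neighborSet w).ncard := by
    rw [← Finset.sum_add_sum_compl T (f := fun w => (G.neighborSet w).ncard)]
    rw [← Finset.sum_sdiff hST]
    omega
  have hb1 : ∑ w ∈ S, (G.neighborSet w).ncard ≤ k * k := by
    have := Finset.sum_le_card_nsmul S (fun w => (G.neighborSet w).ncard) k
      (fun w hw => hS₀deg w (hSsub hw))
    simpa [hScard, smul_eq_mul] using this
  have hb2 : ∑ w ∈ T \ S, (G.neighborSet w).ncard ≤ (n - 2 * k) * (n - k - 1) := by
    have hcard : (T \ S).card = n - 2 * k := by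
      rw [Finset.card_sdiff_of_subset hST, hScard, hTcard']
      omega
    have := Finset.sum_le_card_nsmul (T \ S) (fun w => (G.neighborSet w).ncard) (n - k - 1)
      (fun w hw => hRc_deg w (hTRc (Finset.mem_sdiff.mp hw).1))
    simpa [hcard, smul_eq_mul] using this
  have hb3 : ∑ w ∈ Tᶜ, (G.neighborSet w).ncard ≤ k * (n - 1) := by
    have hcard : Tᶜ.card = k := by
      rw [Finset.card_compl, hTcard', ← hn]
      omega
    have := Finset.sum_le_card_nsmul Tᶜ (fun w => (G.neighborSet w).ncard) (n - 1)
      (fun w _ => hDle w)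
    simpa [hcard, smul_eq_mul] using this
  have htotal : 2 * G.edgeSet.ncard ≤ k * k + (n - 2 * k) * (n - k - 1) + k * (n - 1) := by
    rw [← EB.sum_D, hsplit]
    omega
  have hid : k * k + (n - 2 * k) * (n - k - 1) + k * (n - 1) = 2 * hfun n k 0 := by
    clear_value n
    clear hn hd hsum hDle htotal hRccard hRc_deg
    obtain ⟨t, rfl⟩ : ∃ t, n = 2 * k + 1 + t := ⟨n - 2 * k - 1, by omega⟩
    rw [EB.two_hfun _ k (by omega)]
    have e1 : 2 * k + 1 + t - 2 * k = t + 1 := by omega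
    have e2 : 2 * k + 1 + t - k - 1 = k + t := by omega
    have e3 : 2 * k + 1 + t - 1 = 2 * k + t := by omega
    have e4 : 2 * k + 1 + t - k = k + 1 + t := by omega
    rw [e1, e2, e3, e4]
    ring
  have hek : G.edgeSet.ncard ≤ hfun n k 0 := by omega
  exact le_trans hek (EB.convex hkd (by omega))

lemma EB.sat_count [Fintype V] [DecidableEq V] {d : ℕ}
    (hd0 : 0 < d) (hd : d ≤ (Fintype.card V - 1) / 2)
    (hnoham : ¬ ∃ (a : V) (c : G.Walk a a), c.IsHamiltonianCycle)
    (hsat : ∀ u v : V, u ≠ v → ¬ G.Adj u v → (G ⊔ SimpleGraph.edge u v).IsHamiltonian)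
    (hmin : ∀ w, d ≤ (G.neighborSet w).ncard) :
    G.edgeSet.ncard ≤
      max (hfun (Fintype.card V) d 0) (hfun (Fintype.card V) ((Fintype.card V - 1) / 2) 0) := by
  classical
  have hn3 : 3 ≤ Fintype.card V := by
    have h1 : 1 ≤ (Fintype.card V - 1) / 2 := le_trans hd0 hd
    omega
  have hOre : ∀ x y : V, x ≠ y → ¬ G.Adj x y →
      (G.neighborSet x).ncard + (G.neighborSet y).ncard ≤ Fintype.card V - 1 := by
    intro x y hxy hnadj
    obtain ⟨P, hP, hsup⟩ := EB.ham_path_of_sat hnoham hxy hnadj (hsat x y hxy hnadj)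
    exact EB.ore_path hP hsup hnadj hnoham
  -- the set of nonadjacent pairs is nonempty
  set Q : Finset (V × V) := (univ ×ˢ univ).filter (fun p => p.1 ≠ p.2 ∧ ¬ G.Adj p.1 p.2) with hQ
  have hQmem : ∀ p : V × V, p ∈ Q ↔ p.1 ≠ p.2 ∧ ¬ G.Adj p.1 p.2 := by
    intro p; rw [hQ, Finset.mem_filter]; simp
  have hQne : Q.Nonempty := by
    by_contra hemp
    rw [Finset.not_nonempty_iff_eq_empty] at hemp
    have hcomp : ∀ x y : V, x ≠ y → G.Adj x y := by
      intro x y hxy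
      by_contra hadj
      have : (x, y) ∈ Q := (hQmem (x, y)).mpr ⟨hxy, hadj⟩
      rw [hemp] at this
      exact absurd this (Finset.notMem_empty _)
    exact hnoham (EB.complete_ham hn3 hcomp)
  obtain ⟨p, hpQ, hpmax⟩ := Finset.exists_max_image Q
    (fun p => (G.neighborSet p.1).ncard + (G.neighborSet p.2).ncard) hQne
  obtain ⟨hpne, hpnadj⟩ := (hQmem p).mp hpQ
  have hmax : ∀ x y : V, x ≠ y → ¬ G.Adj x y →
      (G.neighborSet x).ncard + (G.neighborSet y).ncard ≤
        (G.neighborSet p.1).ncard + (G.neighborSet p.2).ncard := by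
    intro x y hxy hnadj
    exact hpmax (x, y) ((hQmem (x, y)).mpr ⟨hxy, hnadj⟩)
  rcases le_total ((G.neighborSet p.1).ncard) ((G.neighborSet p.2).ncard) with hcle | hcle
  · exact EB.sat_core hd0 hd hmin hpne hpnadj (hOre p.1 p.2 hpne hpnadj) hcle hmax
  · exact EB.sat_core hd0 hd hmin (Ne.symm hpne) (fun h => hpnadj h.symm)
      (by rw [Nat.add_comm]; exact hOre p.1 p.2 hpne hpnadj) hcle
      (fun x y hxy hnadj => by
        have := hmax x y hxy hnadj
        omega)

lemma EB.descend [Fintype V] [DecidableEq V] {d : ℕ}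
    (hd0 : 0 < d) (hd : d ≤ (Fintype.card V - 1) / 2) :
    ∀ (c : ℕ) (G : SimpleGraph V),
      (¬ ∃ (a : V) (cy : G.Walk a a), cy.IsHamiltonianCycle) →
      (∀ w, d ≤ (G.neighborSet w).ncard) →
      ((⊤ : SimpleGraph V).edgeSet.ncard - G.edgeSet.ncard ≤ c) →
      G.edgeSet.ncard ≤
        max (hfun (Fintype.card V) d 0) (hfun (Fintype.card V) ((Fintype.card V - 1) / 2) 0) := by
  intro c
  induction c with
  | zero =>
    intro G hnoham hmin hmeas
    by_cases hsat : ∀ u v : V, u ≠ v → ¬ G.Adj u v →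
        ∃ (a : V) (cy : (G ⊔ SimpleGraph.edge u v).Walk a a), cy.IsHamiltonianCycle
    · exact EB.sat_count hd0 hd hnoham (fun u v h1 h2 _ => hsat u v h1 h2) hmin
    · push_neg at hsat
      obtain ⟨u, v, hne, hnadj, _⟩ := hsat
      exfalso
      have h1 : (G ⊔ SimpleGraph.edge u v).edgeSet.ncard = G.edgeSet.ncard + 1 := by
        rw [edgeSet_sup, edge_edgeSet_of_ne hne, Set.union_singleton,
          Set.ncard_insert_of_notMem (by rwa [mem_edgeSet]) G.edgeSet.toFinite]
      have h2 : (G ⊔ SimpleGraph.edge u v).edgeSet.ncard ≤ (⊤ : SimpleGraph V).edgeSet.ncard :=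
        Set.ncard_le_ncard (edgeSet_mono le_top) (⊤ : SimpleGraph V).edgeSet.toFinite
      omega
  | succ c ih =>
    intro G hnoham hmin hmeas
    by_cases hsat : ∀ u v : V, u ≠ v → ¬ G.Adj u v →
        ∃ (a : V) (cy : (G ⊔ SimpleGraph.edge u v).Walk a a), cy.IsHamiltonianCycle
    · exact EB.sat_count hd0 hd hnoham (fun u v h1 h2 _ => hsat u v h1 h2) hmin
    · push_neg at hsat
      obtain ⟨u, v, hne, hnadj, hnoham'⟩ := hsat
      have h1 : (G ⊔ SimpleGraph.edge u v).edgeSet.ncard = G.edgeSet.ncard + 1 := by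
        rw [edgeSet_sup, edge_edgeSet_of_ne hne, Set.union_singleton,
          Set.ncard_insert_of_notMem (by rwa [mem_edgeSet]) G.edgeSet.toFinite]
      have h2 : (G ⊔ SimpleGraph.edge u v).edgeSet.ncard ≤ (⊤ : SimpleGraph V).edgeSet.ncard :=
        Set.ncard_le_ncard (edgeSet_mono le_top) (⊤ : SimpleGraph V).edgeSet.toFinite
      have hmin' : ∀ w, d ≤ ((G ⊔ SimpleGraph.edge u v).neighborSet w).ncard := by
        intro w
        refine le_trans (hmin w) (Set.ncard_le_ncard ?_
          ((G ⊔ SimpleGraph.edge u v).neighborSet w).toFinite)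
        intro x hx
        exact Or.inl hx
      have := ih (G ⊔ SimpleGraph.edge u v)
        (by push_neg; exact hnoham') hmin' (by omega)
      omega

end EBaux

/-- **Erdős' theorem.** If `0 < d ≤ ⌊(n-1)/2⌋` and `G` is an `n`-vertex nonhamiltonian graph
with minimum degree at least `d`, then `e(G) ≤ max{h(n,d,0), h(n,⌊(n-1)/2⌋,0)}`. -/
theorem erdos_nonhamiltonian_edge_bound {n d : ℕ} (hd0 : 0 < d) (hd : d ≤ (n - 1) / 2)
    (G : SimpleGraph (Fin n)) [DecidableRel G.Adj]
    (hham : ¬ G.IsHamiltonian) (hmin : ∀ v : Fin n, d ≤ G.degree v) :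
    G.edgeSet.ncard ≤ max (hfun n d 0) (hfun n ((n - 1) / 2) 0) := by
  have hcard : Fintype.card (Fin n) = n := Fintype.card_fin n
  have hnoham : ¬ ∃ (a : Fin n) (cy : G.Walk a a), cy.IsHamiltonianCycle := by
    rintro ⟨a, cy, hcy⟩
    exact hham (fun _ => ⟨a, cy, hcy⟩)
  have hmin' : ∀ w, d ≤ (G.neighborSet w).ncard := fun w => by
    rw [EB.ncard_neighborSet]
    exact hmin w
  have := EB.descend (V := Fin n) hd0 (by rw [hcard]; exact hd)
    ((⊤ : SimpleGraph (Fin n)).edgeSet.ncard) G hnoham hmin' (Nat.sub_le _ _)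
  rwa [hcard] at this
end

section
/- Fix integers n, ℓ, r with 0 ≤ ℓ ≤ n − 1 and r ≥ 2, and let a, b be integers with ℓ ≤ a ≤ b ≤ ⌊(n+ℓ−1)/2⌋. Then for every integer k with a ≤ k ≤ b, h_r(n, k, ℓ) ≤ max{ h_r(n, a, ℓ), h_r(n, b, ℓ) }. -/
open SimpleGraph

/-- Auxiliary: a discrete convex sequence attains its max on an interval at an endpoint. -/
lemma seq_convex_max (F : ℕ → ℤ) (a b : ℕ)
    (hconv : ∀ d, a ≤ d → d + 2 ≤ b → 2 * F (d+1) ≤ F d + F (d+2)) :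
    ∀ k, a ≤ k → k ≤ b → F k ≤ max (F a) (F b) := by
  have Dmono : ∀ j, a ≤ j → j + 1 ≤ b → ∀ i, a ≤ i → i ≤ j →
      F (i+1) - F i ≤ F (j+1) - F j := by
    intro j
    induction j with
    | zero =>
      intro _ _ i _ hij
      have : i = 0 := by omega
      subst this; exact le_refl _
    | succ j ih =>
      intro haj hjb i hai hij
      rcases Nat.lt_or_ge i (j+1) with h | h
      · have h1 := ih (by omega) (by omega) i hai (by omega)
        have h2 := hconv j (by omega) (by omega)
        linarith
      · have : i = j + 1 := by omega
        subst this; exact le_refl _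
  intro k hak hkb
  rcases Nat.eq_or_lt_of_le hak with rfl | hak'
  · exact le_max_left _ _
  have hk1 : k - 1 + 1 = k := by omega
  by_cases hd : F k ≤ F (k-1)
  · refine le_trans ?_ (le_max_left _ _)
    have down : ∀ m, ∀ i, i + m = k → a ≤ i → F k ≤ F i := by
      intro m
      induction m with
      | zero =>
        intro i h _
        have : i = k := by omega
        subst this; exact le_refl _
      | succ m ih =>
        intro i h hai
        have hDi := Dmono (k-1) (by omega) (by omega) i hai (by omega)
        rw [hk1] at hDi
        have h1 : F (i+1) ≤ F i := by linarith
        have h2 := ih (i+1) (by omega) (by omega)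
        linarith
    exact down (k - a) a (by omega) le_rfl
  · push_neg at hd
    refine le_trans ?_ (le_max_right _ _)
    have up : ∀ j, k ≤ j → j ≤ b → F k ≤ F j := by
      intro j hkj
      induction j, hkj using Nat.le_induction with
      | base => intro _; exact le_refl _
      | succ j hkj ih =>
        intro hjb
        have h1 := ih (by omega)
        have hDj := Dmono j (by omega) (by omega) (k-1) (by omega) (by omega)
        rw [hk1] at hDj
        linarith
    exact up b hkb le_rfl

/-- Auxiliary: discrete convexity of `hrfun` in the middle argument. -/
lemma hrfun_convex (n ℓ r d : ℕ) (hr : 2 ≤ r) (hld : ℓ ≤ d) (hn : 2*d + 5 ≤ n + ℓ) :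
    2 * hrfun n (d+1) r ℓ ≤ hrfun n d r ℓ + hrfun n (d+2) r ℓ := by
  obtain ⟨t, rfl⟩ : ∃ t, r = t + 2 := ⟨r - 2, by omega⟩
  obtain ⟨e, rfl⟩ : ∃ e, d = ℓ + e := ⟨d - ℓ, by omega⟩
  obtain ⟨M, hM⟩ : ∃ M, n - (ℓ + e) + ℓ = M + 2 := ⟨n - (ℓ + e) + ℓ - 2, by omega⟩
  unfold hrfun
  have h1 : n - (ℓ + e + 1) + ℓ = M + 1 := by omega
  have h2 : n - (ℓ + e + 2) + ℓ = M := by omega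
  have h3 : ℓ + e + 1 - ℓ = e + 1 := by omega
  have h4 : ℓ + e + 2 - ℓ = e + 2 := by omega
  have h5 : ℓ + e - ℓ = e := by omega
  have h6 : t + 2 - 1 = t + 1 := rfl
  rw [hM, h1, h2, h3, h4, h5, h6]
  set d := ℓ + e with hdd
  have p1 : Nat.choose (M+2) (t+2) = Nat.choose (M+1) (t+1) + Nat.choose (M+1) (t+2) :=
    Nat.choose_succ_succ (M+1) (t+1)
  have p2 : Nat.choose (M+1) (t+2) = Nat.choose M (t+1) + Nat.choose M (t+2) :=
    Nat.choose_succ_succ M (t+1)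
  have p3 : Nat.choose M (t+1) ≤ Nat.choose (M+1) (t+1) :=
    Nat.choose_le_choose _ (Nat.le_succ M)
  have q1 : Nat.choose (d+2) (t+1) = Nat.choose (d+1) t + Nat.choose (d+1) (t+1) :=
    Nat.choose_succ_succ (d+1) t
  have q2 : Nat.choose (d+1) (t+1) = Nat.choose d t + Nat.choose d (t+1) :=
    Nat.choose_succ_succ d t
  have q3 : Nat.choose d t ≤ Nat.choose (d+1) t :=
    Nat.choose_le_choose _ (Nat.le_succ d)
  have q4 : e * Nat.choose d t ≤ (e+2) * Nat.choose (d+1) t :=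
    Nat.mul_le_mul (by omega) q3
  have A : 2 * Nat.choose (M+1) (t+2) ≤ Nat.choose (M+2) (t+2) + Nat.choose M (t+2) := by
    rw [p1, p2]; linarith [p3]
  have B : 2 * ((e+1) * Nat.choose (d+1) (t+1)) ≤
      e * Nat.choose d (t+1) + (e+2) * Nat.choose (d+2) (t+1) := by
    rw [q1, q2]; nlinarith [q4]
  linarith [A, B]

/-- Convexity of `h_r(n,·,ℓ)`: on any subinterval `[a,b]` of `[ℓ, ⌊(n+ℓ-1)/2⌋]`, the function
is maximized at an endpoint. -/
theorem hrfun_max_at_endpoints {n ℓ r a b : ℕ} (hln : ℓ + 1 ≤ n) (hr : 2 ≤ r)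
    (hla : ℓ ≤ a) (hab : a ≤ b) (hb : b ≤ (n + ℓ - 1) / 2) :
    ∀ k : ℕ, a ≤ k → k ≤ b → hrfun n k r ℓ ≤ max (hrfun n a r ℓ) (hrfun n b r ℓ) := by
  intro k hak hkb
  have hconv : ∀ d, a ≤ d → d + 2 ≤ b →
      2 * ((hrfun n (d+1) r ℓ : ℤ)) ≤ (hrfun n d r ℓ : ℤ) + (hrfun n (d+2) r ℓ : ℤ) := by
    intro d had hdb
    have hmul : (d + 2) * 2 ≤ n + ℓ - 1 :=
      (Nat.le_div_iff_mul_le (by norm_num : 0 < 2)).mp (le_trans hdb hb)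
    have h2d : 2*d + 5 ≤ n + ℓ := by omega
    have := hrfun_convex n ℓ r d hr (le_trans hla had) h2d
    exact_mod_cast this
  have hm := seq_convex_max (fun d => (hrfun n d r ℓ : ℤ)) a b hconv k hak hkb
  rcases le_max_iff.mp hm with h | h
  · exact le_max_of_le_left (by exact_mod_cast h)
  · exact le_max_of_le_right (by exact_mod_cast h)
end

section
/- Let G be an n-vertex simple graph that is ℓ-saturated. Then for every pair of nonadjacent vertices u, v of G, deg(u) + deg(v) ≤ n − 1 + ℓ. -/
open SimpleGraph

namespace BC
open List
variable {V : Type*} [DecidableEq V] {G : SimpleGraph V}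
set_option linter.unusedSectionVars false
set_option linter.unusedVariables false
set_option maxHeartbeats 1600000

variable {V : Type*} [DecidableEq V] {G : SimpleGraph V}

lemma getElem_eq_getElem (l : List V) {i j : ℕ} (h : i = j) (hi : i < l.length) :
    l[i] = l[j]'(h ▸ hi) := by subst h; rfl

/-- consecutive pairs of a list, as unordered pairs -/
def pairs (l : List V) : List (Sym2 V) := List.zipWith (fun x y => s(x, y)) l l.tail

lemma length_pairs (l : List V) : (pairs l).length = l.length - 1 := by
  rw [pairs, List.length_zipWith, List.length_tail]; omega

lemma getElem_pairs (l : List V) (i : ℕ) (h : i < (pairs l).length) :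
    (pairs l)[i] = s(l[i]'(by rw [length_pairs] at h; omega),
      l[i+1]'(by rw [length_pairs] at h; omega)) := by
  simp [pairs]

lemma mem_pairs_iff {l : List V} {e : Sym2 V} :
    e ∈ pairs l ↔ ∃ j : ℕ, ∃ h : j + 1 < l.length,
      e = s(l[j]'(by omega), l[j+1]) := by
  rw [List.mem_iff_getElem]
  constructor
  · rintro ⟨k, hk, rfl⟩
    exact ⟨k, by rw [length_pairs] at hk; omega, getElem_pairs l k hk⟩
  · rintro ⟨j, hj, rfl⟩
    exact ⟨j, by rw [length_pairs]; omega, getElem_pairs l j _⟩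

lemma edges_eq_pairs {a b : V} (p : G.Walk a b) : p.edges = pairs p.support := by
  induction p with
  | nil => rfl
  | cons h p ih =>
    rw [Walk.edges_cons, Walk.support_cons, ih, pairs, pairs]
    rw [p.support_eq_cons]
    rfl

lemma pairs_cons (w : V) (l : List V) (h : l ≠ []) :
    pairs (w :: l) = s(w, l.head h) :: pairs l := by
  obtain ⟨y, ys, rfl⟩ := List.exists_cons_of_ne_nil h
  rfl

/-- cyclic consecutive pairs -/
def cyclicPairs (l : List V) : List (Sym2 V) := pairs (l ++ l.take 1)

lemma length_cyclicPairs (l : List V) (h : l ≠ []) : (cyclicPairs l).length = l.length := by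
  rw [cyclicPairs, length_pairs, List.length_append, List.length_take]
  have : 0 < l.length := List.length_pos_iff.mpr h
  omega

lemma getElem_cyclicPairs (l : List V) (i : ℕ) (hi : i < l.length) :
    (cyclicPairs l)[i]'(by rwa [length_cyclicPairs l (by rintro rfl; simp at hi)]) =
      s(l[i], l[(i+1) % l.length]'(Nat.mod_lt _ (by omega))) := by
  have hne : l ≠ [] := by rintro rfl; simp at hi
  have h0 : 0 < l.length := List.length_pos_iff.mpr hne
  simp only [cyclicPairs]
  rw [getElem_pairs]
  have hA : (l ++ l.take 1)[i]'(by simp [List.length_take]; omega) = l[i] :=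
    List.getElem_append_left hi
  have hB : (l ++ l.take 1)[i+1]'(by simp [List.length_take]; omega) =
      l[(i+1) % l.length]'(Nat.mod_lt _ (by omega)) := by
    rcases Nat.lt_or_ge (i+1) l.length with h | h
    · rw [List.getElem_append_left h]
      exact getElem_eq_getElem l (Nat.mod_eq_of_lt h).symm _
    · have hi1 : i + 1 = l.length := by omega
      have hm : (i+1) % l.length = 0 := by rw [hi1, Nat.mod_self]
      rw [List.getElem_append_right (by omega)]
      simp only [List.getElem_take, hm]
      exact getElem_eq_getElem l (by omega) _
  rw [hA, hB]

lemma mem_cyclicPairs_iff {l : List V} {e : Sym2 V} (hne : l ≠ []) :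
    e ∈ cyclicPairs l ↔ ∃ j : ℕ, ∃ h : j < l.length,
      e = s(l[j], l[(j+1) % l.length]'(Nat.mod_lt _ (by omega))) := by
  rw [List.mem_iff_getElem]
  constructor
  · rintro ⟨k, hk, rfl⟩
    rw [length_cyclicPairs l hne] at hk
    exact ⟨k, hk, getElem_cyclicPairs l k hk⟩
  · rintro ⟨j, hj, rfl⟩
    exact ⟨j, by rwa [length_cyclicPairs l hne], getElem_cyclicPairs l j hj⟩

lemma cyclicPairs_rotate (l : List V) (hne : l ≠ []) (j : ℕ) :
    cyclicPairs (l.rotate j) = (cyclicPairs l).rotate j := by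
  have h0 : 0 < l.length := List.length_pos_iff.mpr hne
  have hrne : l.rotate j ≠ [] := by
    intro h; apply hne; simpa using congrArg List.length h
  apply List.ext_getElem
  · rw [length_cyclicPairs _ hrne, List.length_rotate, List.length_rotate,
      length_cyclicPairs _ hne]
  intro i h1 h2
  rw [length_cyclicPairs _ hrne, List.length_rotate] at h1
  rw [getElem_cyclicPairs _ i (by rwa [List.length_rotate]), List.getElem_rotate]
  have hR : ((cyclicPairs l).rotate j)[i]'h2 =
      (cyclicPairs l)[(i + j) % l.length]'(by
        rw [length_cyclicPairs _ hne]; exact Nat.mod_lt _ h0) := by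
    rw [List.getElem_rotate]
    congr 1
    rw [length_cyclicPairs _ hne]
  rw [hR, getElem_cyclicPairs l _ (Nat.mod_lt _ h0)]
  rw [List.getElem_rotate]
  simp only [List.length_rotate]
  have hAB : ((i+1) % l.length + j) % l.length = ((i + j) % l.length + 1) % l.length := by
    rw [Nat.mod_add_mod, Nat.mod_add_mod, Nat.add_right_comm]
  simp only [hAB]

lemma pairs_append_singleton (l : List V) (hne : l ≠ []) (a : V) :
    pairs (l ++ [a]) = pairs l ++ [s(l.getLast hne, a)] := by
  induction l with
  | nil => simp at hne
  | cons x xs ih =>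
    cases xs with
    | nil => simp [pairs]
    | cons y ys =>
      have := ih (by simp)
      simp only [pairs] at *
      simp only [List.cons_append, List.tail_cons, List.zipWith_cons_cons] at *
      rw [this]
      simp [List.getLast_cons]

lemma cyclicPairs_eq (l : List V) (hne : l ≠ []) :
    cyclicPairs l = pairs l ++ [s(l.getLast hne, l.head hne)] := by
  rw [cyclicPairs]
  obtain ⟨x, xs, rfl⟩ := List.exists_cons_of_ne_nil hne
  rw [show (x::xs).take 1 = [x] from rfl]
  exact pairs_append_singleton _ hne _

lemma chain'_of_pairs {H : SimpleGraph V} {l : List V}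
    (h : ∀ e ∈ pairs l, e ∈ H.edgeSet) : l.Chain' H.Adj := by
  refine List.isChain_iff_getElem.mpr ?_
  intro i hi
  have : s(l.get ⟨i, by omega⟩, l.get ⟨i+1, by omega⟩) ∈ H.edgeSet := by
    apply h
    rw [mem_pairs_iff]
    exact ⟨i, by omega, by simp⟩
  exact this

lemma pairs_subset_of_chain' {l : List V} (h : l.Chain' G.Adj) :
    ∀ e ∈ pairs l, e ∈ G.edgeSet := by
  intro e he
  rw [mem_pairs_iff] at he
  obtain ⟨j, hj, rfl⟩ := he
  replace h := List.isChain_iff_getElem.mp h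
  exact h j (by omega)


variable {V : Type*} [DecidableEq V] {G : SimpleGraph V}



/-- build a walk from a chain -/
def mkWalk (G : SimpleGraph V) : (a : V) → (l : List V) → (b : V) →
    List.Chain G.Adj a (l ++ [b]) → G.Walk a b
  | _, [], _, h => Walk.cons (List.isChain_cons_cons.mp h).1 Walk.nil
  | a, x :: xs, b, h =>
    Walk.cons (List.isChain_cons_cons.mp (show List.IsChain G.Adj (a :: x :: (xs ++ [b])) from h)).1
      (mkWalk G x xs b (show List.Chain G.Adj x (xs ++ [b]) from
        (List.isChain_cons_cons.mp (show List.IsChain G.Adj (a :: x :: (xs ++ [b])) from h)).2))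

lemma support_mkWalk (G : SimpleGraph V) : ∀ (a : V) (l : List V) (b : V)
    (h : List.Chain G.Adj a (l ++ [b])), (mkWalk G a l b h).support = a :: (l ++ [b])
  | _, [], _, _ => rfl
  | a, x :: xs, b, h => by
    rw [mkWalk, Walk.support_cons, support_mkWalk G x xs b]
    rfl

lemma ham_of_list [Fintype V] (l : List V) (hnd : l.Nodup) (hall : ∀ x, x ∈ l)
    (h3 : 3 ≤ l.length) (hch : l.Chain' G.Adj)
    (hwrap : G.Adj (l.getLast (by rintro rfl; simp at h3)) (l.head (by rintro rfl; simp at h3))) :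
    ∃ (a : V) (c : G.Walk a a), c.IsHamiltonianCycle ∧ c.edges = cyclicPairs l := by
  match l, h3 with
  | a :: x :: t', _ =>
  set l : List V := a :: x :: t' with hl
  have hne : l ≠ [] := by simp [hl]
  have hch2 : List.Chain' G.Adj (l ++ [a]) := by
    apply List.IsChain.append hch (List.isChain_singleton a)
    intro p hp q hq
    simp only [List.head?_cons, Option.mem_def, Option.some.injEq] at hq
    rw [List.getLast?_eq_getLast hne, Option.mem_def, Option.some.injEq] at hp
    subst hp; subst hq
    exact hwrap
  have hchain : List.IsChain G.Adj (a :: x :: (t' ++ [a])) := hch2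
  set R : G.Walk x a := mkWalk G x t' a (List.isChain_cons_cons.mp hchain).2 with hR
  set c : G.Walk a a := Walk.cons (List.isChain_cons_cons.mp hchain).1 R with hc
  have hsupR : R.support = x :: (t' ++ [a]) := support_mkWalk G x t' a _
  have hsupc : c.support = a :: (x :: (t' ++ [a])) := by
    rw [hc, Walk.support_cons, hsupR]
  have hpermR : R.support ~ l := by
    rw [hsupR, hl]
    calc x :: (t' ++ [a]) ~ x :: (a :: t') := by
          exact List.Perm.cons x (List.perm_append_singleton a t')
      _ ~ a :: x :: t' := List.Perm.swap a x t'
  have hRnodup : R.support.Nodup := hpermR.nodup_iff.mpr hnd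
  have hRpath : R.IsPath := Walk.IsPath.mk' hRnodup
  have hlen : l.length = t'.length + 2 := by simp [hl]
  -- a is at the last position of R.support
  have hedge_not : s(a, x) ∉ R.edges := by
    rw [edges_eq_pairs, hsupR, mem_pairs_iff]
    rintro ⟨j, hj, hjeq⟩
    have hmnodup : (x :: (t' ++ [a])).Nodup := by rw [← hsupR]; exact hRnodup
    have hmlen : (x :: (t' ++ [a])).length = t'.length + 2 := by simp
    have hlastm : (x :: (t' ++ [a]))[t'.length + 1]'(by simp) = a := by
      rw [List.getElem_cons_succ, List.getElem_append_right (by omega)]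
      simp
    have hm0 : (x :: (t' ++ [a]))[0]'(by simp) = x := rfl
    simp only [Sym2.eq, Sym2.rel_iff', Prod.mk.injEq, Prod.swap_prod_mk] at hjeq
    rcases hjeq with ⟨h1, h2⟩ | ⟨h1, h2⟩
    · -- a = m[j]
      have heq : (x :: (t' ++ [a]))[j]'(by omega) = (x :: (t' ++ [a]))[t'.length+1]'(by omega) := by
        rw [hlastm]; exact h1.symm
      have := (hmnodup.getElem_inj_iff).mp heq
      omega
    · -- a = m[j+1], x = m[j]
      have heq1 : (x :: (t' ++ [a]))[j+1]'(by omega) =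
          (x :: (t' ++ [a]))[t'.length+1]'(by omega) := by
        rw [hlastm]; exact h1.symm
      have hj1 := (hmnodup.getElem_inj_iff).mp heq1
      have heq0 : (x :: (t' ++ [a]))[j]'(by omega) = (x :: (t' ++ [a]))[0]'(by omega) := by
        rw [hm0]; exact h2.symm
      have hj0 := (hmnodup.getElem_inj_iff).mp heq0
      omega
  have hcyc : c.IsCycle := by
    rw [hc, Walk.cons_isCycle_iff]
    exact ⟨hRpath, hedge_not⟩
  refine ⟨a, c, ?_, ?_⟩
  · rw [Walk.isHamiltonianCycle_iff_isCycle_and_support_count_tail_eq_one]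
    refine ⟨hcyc, fun y => ?_⟩
    rw [hsupc]
    simp only [List.tail_cons]
    rw [← hsupR, hpermR.count_eq]
    exact List.count_eq_one_of_mem hnd (hall y)
  · rw [edges_eq_pairs, hsupc]
    rw [cyclicPairs]
    congr 1
lemma surgery [Fintype V] [DecidableRel G.Adj] {u v : V} {F : SimpleGraph V} {ℓ : ℕ}
    (xs : List V) (hnd : xs.Nodup) (hall : ∀ x, x ∈ xs) (h3 : 3 ≤ xs.length)
    (hch : xs.Chain' G.Adj)
    (hv0 : xs[0]'(by omega) = v) (hu0 : xs[xs.length - 1]'(by omega) = u)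
    (hne : u ≠ v) (hnadj : ¬ G.Adj u v)
    (hFcard : F.edgeSet.ncard = ℓ)
    (hFxs : ∀ e ∈ F.edgeSet, e ∈ pairs xs)
    (hdeg : xs.length + ℓ ≤ G.degree u + G.degree v) :
    ∃ zs : List V, zs.Nodup ∧ (∀ x, x ∈ zs) ∧ 3 ≤ zs.length ∧ zs.Chain' G.Adj ∧
      (∀ hz : zs ≠ [], G.Adj (zs.getLast hz) (zs.head hz)) ∧
      ∀ e ∈ F.edgeSet, e ∈ cyclicPairs zs := by
  classical
  set f : ℕ → V := fun i => xs.getD i u with hfdef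
  have hf : ∀ i (h : i < xs.length), f i = xs[i] := fun i h => List.getD_eq_getElem xs u h
  have hfinj : ∀ i j, i < xs.length → j < xs.length → f i = f j → i = j := by
    intro i j hi hj hij
    rw [hf i hi, hf j hj] at hij
    exact (hnd.getElem_inj_iff).mp hij
  have hfmem : ∀ w : V, ∃ i, i < xs.length ∧ f i = w := by
    intro w
    obtain ⟨i, hi, hiw⟩ := List.mem_iff_getElem.mp (hall w)
    exact ⟨i, hi, by rw [hf i hi]; exact hiw⟩
  have hN0 : f 0 = v := by rw [hf 0 (by omega)]; exact hv0
  have hN1 : f (xs.length-1) = u := by rw [hf _ (by omega)]; exact hu0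
  set S : Finset ℕ := (Finset.range (xs.length-1)).filter (fun i => G.Adj u (f i)) with hS
  set T : Finset ℕ := (Finset.range (xs.length-1)).filter (fun i => G.Adj v (f (i+1))) with hT
  set W : Finset ℕ := (Finset.range (xs.length-1)).filter (fun i => s(f i, f (i+1)) ∈ F.edgeSet) with hW
  have cardS : S.card = G.degree u := by
    rw [SimpleGraph.degree]
    apply Finset.card_bij (fun i _ => f i)
    · intro a ha
      rw [hS, Finset.mem_filter] at ha
      rw [SimpleGraph.mem_neighborFinset]
      exact ha.2
    · intro a ha b hb hab
      rw [hS, Finset.mem_filter, Finset.mem_range] at ha hb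
      exact hfinj a b (by omega) (by omega) hab
    · intro w hw
      rw [SimpleGraph.mem_neighborFinset] at hw
      obtain ⟨i, hi, rfl⟩ := hfmem w
      have hiN : i ≠ xs.length - 1 := by
        intro h; subst h; rw [hN1] at hw; exact G.irrefl hw
      refine ⟨i, ?_, rfl⟩
      rw [hS, Finset.mem_filter, Finset.mem_range]
      exact ⟨by omega, hw⟩
  have cardT : T.card = G.degree v := by
    rw [SimpleGraph.degree]
    apply Finset.card_bij (fun i _ => f (i+1))
    · intro a ha
      rw [hT, Finset.mem_filter] at ha
      rw [SimpleGraph.mem_neighborFinset]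
      exact ha.2
    · intro a ha b hb hab
      rw [hT, Finset.mem_filter, Finset.mem_range] at ha hb
      have := hfinj (a+1) (b+1) (by omega) (by omega) hab
      omega
    · intro w hw
      rw [SimpleGraph.mem_neighborFinset] at hw
      obtain ⟨i, hi, rfl⟩ := hfmem w
      have hiN : i ≠ 0 := by
        intro h; subst h; rw [hN0] at hw; exact G.irrefl hw
      refine ⟨i - 1, ?_, by rw [show i - 1 + 1 = i by omega]⟩
      rw [hT, Finset.mem_filter, Finset.mem_range]
      rw [show i - 1 + 1 = i by omega]
      exact ⟨by omega, hw⟩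
  have cardW : W.card ≤ ℓ := by
    have hFfin : F.edgeSet.Finite := Set.toFinite _
    have hWimg : W.image (fun i => s(f i, f (i+1))) ⊆ hFfin.toFinset := by
      intro e he
      rw [Finset.mem_image] at he
      obtain ⟨i, hi, rfl⟩ := he
      rw [hW, Finset.mem_filter] at hi
      rw [Set.Finite.mem_toFinset]
      exact hi.2
    have hinj : Set.InjOn (fun i => s(f i, f (i+1))) W := by
      intro a ha b hb hab
      rw [Finset.mem_coe, hW, Finset.mem_filter, Finset.mem_range] at ha hb
      simp only [Sym2.eq, Sym2.rel_iff', Prod.mk.injEq, Prod.swap_prod_mk] at hab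
      rcases hab with ⟨h1, h2⟩ | ⟨h1, h2⟩
      · exact hfinj a b (by omega) (by omega) h1
      · have e1 := hfinj a (b+1) (by omega) (by omega) h1
        have e2 := hfinj (a+1) b (by omega) (by omega) h2
        omega
    calc W.card = (W.image (fun i => s(f i, f (i+1)))).card :=
          (Finset.card_image_of_injOn hinj).symm
      _ ≤ hFfin.toFinset.card := Finset.card_le_card hWimg
      _ = ℓ := by rw [← Set.ncard_eq_toFinset_card _ hFfin, hFcard]
  have hSTcard : ℓ + 1 ≤ (S ∩ T).card := by
    have h1 : (S ∪ T).card ≤ xs.length - 1 := by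
      have hsub : S ∪ T ⊆ Finset.range (xs.length-1) := by
        intro x hx
        rcases Finset.mem_union.mp hx with hx | hx
        · exact Finset.mem_of_mem_filter x hx
        · exact Finset.mem_of_mem_filter x hx
      simpa using Finset.card_le_card hsub
    have h2 := Finset.card_union_add_card_inter S T
    rw [cardS, cardT] at h2
    omega
  obtain ⟨i, hi⟩ : ((S ∩ T) \ W).Nonempty := by
    rw [← Finset.card_pos]
    have := Finset.le_card_sdiff W (S ∩ T)
    omega
  rw [Finset.mem_sdiff, Finset.mem_inter] at hi
  obtain ⟨⟨hiS, hiT⟩, hiW'⟩ := hi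
  rw [hS, Finset.mem_filter, Finset.mem_range] at hiS
  rw [hT, Finset.mem_filter] at hiT
  rw [hW, Finset.mem_filter, Finset.mem_range] at hiW'
  have hiN : i < xs.length - 1 := hiS.1
  have hui : G.Adj u (f i) := hiS.2
  have hvi : G.Adj v (f (i+1)) := hiT.2
  have hWi : s(f i, f (i+1)) ∉ F.edgeSet := fun h => hiW' ⟨hiN, h⟩
  -- the rerouted cyclic list
  set zs : List V := xs.take (i+1) ++ (xs.drop (i+1)).reverse with hzs
  have hperm : zs ~ xs := by
    calc zs ~ xs.take (i+1) ++ xs.drop (i+1) :=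
          List.Perm.append_left _ (List.reverse_perm _)
      _ = xs := List.take_append_drop _ _
  have hlen : zs.length = xs.length := hperm.length_eq
  have hzne : zs ≠ [] := by
    intro h; rw [h] at hlen; simp at hlen; omega
  have hz1 : ∀ k, ∀ hk : k < i+1, zs[k]'(by omega) = xs[k]'(by omega) := by
    intro k hk
    have h1 : (xs.take (i+1) ++ (xs.drop (i+1)).reverse)[k]'(by
        simp only [List.length_append, List.length_take, List.length_reverse,
          List.length_drop]; omega) = (xs.take (i+1))[k]'(by
        simp only [List.length_take]; omega) :=
      List.getElem_append_left (by simp only [List.length_take]; omega)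
    rw [List.getElem_take] at h1
    exact h1
  have hz2 : ∀ k, ∀ hk1 : i+1 ≤ k, ∀ hk : k < xs.length, zs[k]'(by omega) = xs[xs.length + i - k]'(by omega) := by
    intro k hk1 hk2
    have h1 : (xs.take (i+1) ++ (xs.drop (i+1)).reverse)[k]'(by
        simp only [List.length_append, List.length_take, List.length_reverse,
          List.length_drop]; omega) =
        ((xs.drop (i+1)).reverse)[k - (xs.take (i+1)).length]'(by
        simp only [List.length_take, List.length_reverse, List.length_drop]; omega) :=
      List.getElem_append_right (by simp only [List.length_take]; omega)
    rw [List.getElem_reverse, List.getElem_drop] at h1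
    exact h1.trans (getElem_eq_getElem xs (by
      simp only [List.length_take, List.length_reverse, List.length_drop]; omega)
      (by simp only [List.length_take, List.length_reverse, List.length_drop]; omega))
  have hznd : zs.Nodup := hperm.nodup_iff.mpr hnd
  have hzall : ∀ x, x ∈ zs := fun x => hperm.mem_iff.mpr (hall x)
  have hlast : (xs.take (i+1)).getLast? = some (xs[i]'(by omega)) := by
    have h1 : (xs.take (i+1)).length - 1 = i := by rw [List.length_take]; omega
    rw [List.getLast?_eq_getElem?, h1,
      List.getElem?_eq_getElem (by rw [List.length_take]; omega)]
    rw [List.getElem_take]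
  have hhead : ((xs.drop (i+1)).reverse).head? = some (xs[xs.length-1]'(by omega)) := by
    rw [List.head?_reverse, List.getLast?_eq_getElem?]
    have h1 : (xs.drop (i+1)).length - 1 = xs.length - i - 2 := by rw [List.length_drop]; omega
    rw [h1, List.getElem?_eq_getElem (by rw [List.length_drop]; omega), List.getElem_drop]
    rw [getElem_eq_getElem xs (show i + 1 + (xs.length - i - 2) = xs.length - 1 by omega)]
  have hchz : zs.Chain' G.Adj := by
    rw [hzs]
    apply List.IsChain.append (List.IsChain.take hch _)
    · rw [List.isChain_reverse]
      exact List.IsChain.imp (fun a b h => G.adj_symm h) (List.IsChain.drop hch _)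
    · intro p hp q hq
      simp only [hlast, Option.mem_def, Option.some.injEq] at hp
      simp only [hhead, Option.mem_def, Option.some.injEq] at hq
      subst hp; subst hq
      rw [hf i (by omega)] at hui
      rw [hu0]
      exact hui.symm
  refine ⟨zs, hznd, hzall, by omega, hchz, ?_, ?_⟩
  · intro hz
    rw [List.getLast_eq_getElem, List.head_eq_getElem]
    simp only [hlen]
    rw [hz2 (xs.length-1) (by omega) (by omega), hz1 0 (by omega)]
    rw [getElem_eq_getElem xs (show xs.length + i - (xs.length - 1) = i + 1 by omega) (by omega)]
    rw [hf (i+1) (by omega)] at hvi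
    rw [hv0]
    exact hvi.symm
  · intro e he
    obtain ⟨j, hj, rfl⟩ := mem_pairs_iff.mp (hFxs e he)
    have hjne : j ≠ i := by
      intro h; subst h
      apply hWi
      rw [hf j (by omega), hf (j+1) (by omega)]
      exact he
    rw [mem_cyclicPairs_iff hzne]
    rcases Nat.lt_or_ge j i with hji | hji
    · refine ⟨j, by omega, ?_⟩
      simp only [hlen]
      rw [getElem_eq_getElem zs (show (j+1) % xs.length = j + 1 from Nat.mod_eq_of_lt (by omega))
        (by rw [hlen]; exact Nat.mod_lt _ (by omega))]
      rw [hz1 j (by omega), hz1 (j+1) (by omega)]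
    · have hji' : i < j := by omega
      refine ⟨xs.length + i - j - 1, by omega, ?_⟩
      simp only [hlen]
      rw [getElem_eq_getElem zs
        (show (xs.length + i - j - 1 + 1) % xs.length = xs.length + i - j - 1 + 1 from
          Nat.mod_eq_of_lt (by omega))
        (by rw [hlen]; exact Nat.mod_lt _ (by omega))]
      rw [hz2 (xs.length+i-j-1) (by omega) (by omega), hz2 (xs.length+i-j-1+1) (by omega) (by omega)]
      rw [getElem_eq_getElem xs (show xs.length + i - (xs.length + i - j - 1) = j + 1 by omega) (by omega)]
      rw [getElem_eq_getElem xs (show xs.length + i - (xs.length + i - j - 1 + 1) = j by omega) (by omega)]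
      exact Sym2.eq_swap

end BC
open BC
open scoped List

set_option maxHeartbeats 1600000 in
/-- **Bondy–Chvátal.** In an `ℓ`-saturated `n`-vertex graph, every pair of nonadjacent
vertices has degree sum at most `n - 1 + ℓ`. -/
theorem lSaturated_degree_sum {n ℓ : ℕ} (G : SimpleGraph (Fin n)) [DecidableRel G.Adj]
    (hsat : G.IsLSaturated ℓ) :
    ∀ u v : Fin n, u ≠ v → ¬ G.Adj u v → G.degree u + G.degree v ≤ n - 1 + ℓ := by
  classical
  intro u v hne hnadj
  by_contra hdeg
  push_neg at hdeg
  obtain ⟨hnotham, hsat2⟩ := hsat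
  have hham := hsat2 u v hne hnadj
  rw [SimpleGraph.IsLHamiltonian] at hnotham
  push_neg at hnotham
  obtain ⟨F, hFG, hFlin, hFcard, hnoc⟩ := hnotham
  obtain ⟨w, c, hc, hFc⟩ := hham F (le_trans hFG le_sup_left) hFlin hFcard
  -- extract the support cycle list t
  have hsupp : c.support = w :: c.support.tail := c.support_eq_cons
  set t : List (Fin n) := c.support.tail with htdef
  have ht1 : ∀ x, t.count x = 1 := by
    intro x
    have := hc.isHamiltonian_tail x
    rwa [SimpleGraph.Walk.support_tail_of_not_nil c hc.1.not_nil] at this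
  have htall : ∀ x, x ∈ t := fun x => List.count_pos_iff.mp (by rw [ht1 x]; omega)
  have htnd : t.Nodup := List.nodup_iff_count_eq_one.mpr (fun a _ => ht1 a)
  have htne : t ≠ [] := by
    intro h; have := htall u; rw [h] at this; simp at this
  have hclen : c.length = n := by rw [hc.length_eq, Fintype.card_fin]
  have htlen : t.length = n := by
    have h1 : c.support.length = c.length + 1 := SimpleGraph.Walk.length_support c
    rw [hsupp] at h1
    simp only [List.length_cons] at h1
    omega
  have h3n : 3 ≤ n := by
    have := hc.isCycle.three_le_length
    omega
  have hlastt : t.getLast htne = w := by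
    have h1 : c.support.getLast? = some w := by
      rw [List.getLast?_eq_getLast_of_ne_nil (c.support_ne_nil)]
      exact congrArg some (SimpleGraph.Walk.getLast_support c)
    rw [hsupp] at h1
    obtain ⟨y, ys, hty⟩ := List.exists_cons_of_ne_nil htne
    rw [hty, List.getLast?_cons_cons, ← hty,
      List.getLast?_eq_getLast_of_ne_nil htne] at h1
    exact Option.some.inj h1
  -- cyclic pairs of t are (a permutation of) the edges of c
  have hCP : cyclicPairs t ~ c.edges := by
    have h1 : cyclicPairs t = pairs t ++ [s(t.getLast htne, t.head htne)] :=
      cyclicPairs_eq t htne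
    rw [hlastt] at h1
    have h2 : c.edges = s(w, t.head htne) :: pairs t := by
      rw [edges_eq_pairs, hsupp]
      exact pairs_cons w t htne
    rw [h1, h2]
    exact List.perm_append_singleton _ _
  have hGprime : ∀ e ∈ cyclicPairs t, e ∈ (G ⊔ SimpleGraph.edge u v).edgeSet :=
    fun e he => c.edges_subset_edgeSet (hCP.mem_iff.mp he)
  have hsplit : ∀ e ∈ cyclicPairs t, e ≠ s(u, v) → e ∈ G.edgeSet := by
    intro e he hene
    have := hGprime e he
    rw [SimpleGraph.edgeSet_sup, SimpleGraph.edge_edgeSet_of_ne hne] at this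
    rcases this with h | h
    · exact h
    · exact absurd h hene
  have hFedge : ∀ e ∈ F.edgeSet, e ≠ s(u, v) := by
    intro e he
    have heG : e ∈ G.edgeSet := SimpleGraph.edgeSet_subset_edgeSet.mpr hFG he
    intro h
    subst h
    rw [SimpleGraph.mem_edgeSet] at heG
    exact hnadj heG
  -- final contradiction helper: a list giving a hamiltonian cycle in G containing F
  have hfinal : ∀ zs : List (Fin n), zs.Nodup → (∀ x, x ∈ zs) → 3 ≤ zs.length →
      zs.Chain' G.Adj → (∀ hz : zs ≠ [], G.Adj (zs.getLast hz) (zs.head hz)) →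
      (∀ e ∈ F.edgeSet, e ∈ cyclicPairs zs) → False := by
    intro zs h1 h2 h3 h4 h5 h6
    obtain ⟨a, c', hc', hedges⟩ := ham_of_list zs h1 h2 h3 h4 (h5 _)
    obtain ⟨e, heF, henc⟩ := hnoc a c' hc'
    exact henc (by rw [hedges]; exact h6 e heF)
  by_cases huv : s(u, v) ∈ cyclicPairs t
  · -- the cycle uses the new edge: rotate and reroute
    obtain ⟨j, hj, he⟩ := (mem_cyclicPairs_iff htne).mp huv
    set r : ℕ := (j + 1) % t.length with hr
    set zs0 : List (Fin n) := t.rotate r with hzs0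
    have hperm0 : zs0 ~ t := List.rotate_perm t r
    have h0len : zs0.length = n := by rw [hzs0, List.length_rotate, htlen]
    have h0ne : zs0 ≠ [] := by intro h; rw [h] at h0len; simp at h0len; omega
    have hcp0 : cyclicPairs zs0 ~ cyclicPairs t := by
      rw [hzs0, cyclicPairs_rotate t htne r]
      exact List.rotate_perm _ _
    have h0nd : zs0.Nodup := hperm0.nodup_iff.mpr htnd
    have h0all : ∀ x, x ∈ zs0 := fun x => hperm0.mem_iff.mpr (htall x)
    have hcpnd : (cyclicPairs zs0).Nodup :=
      ((hcp0.trans hCP).nodup_iff).mpr hc.isCycle.isTrail.edges_nodup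
    -- the wrap pair of zs0 is s(u,v)
    have hlast0 : zs0[zs0.length - 1]'(by omega) = t[j] := by
      have h1 : zs0[zs0.length - 1]'(by omega) =
          t[(zs0.length - 1 + r) % t.length]'(Nat.mod_lt _ (by omega)) := by
        exact List.getElem_rotate t r _ _
      have hmod : (zs0.length - 1 + r) % t.length = j := by
        rw [h0len, htlen, hr, htlen]
        rw [Nat.add_comm (n-1), Nat.mod_add_mod]
        rw [show j + 1 + (n - 1) = j + n by omega]
        rw [Nat.add_mod_right, Nat.mod_eq_of_lt (by omega)]
      rw [h1]
      exact getElem_eq_getElem t hmod _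
    have h00 : zs0[0]'(by omega) = t[(j+1) % t.length]'(Nat.mod_lt _ (by omega)) := by
      have h1 : zs0[0]'(by omega) =
          t[(0 + r) % t.length]'(Nat.mod_lt _ (by omega)) := by
        exact List.getElem_rotate t r _ _
      have hmod : (0 + r) % t.length = (j+1) % t.length := by
        rw [Nat.zero_add, hr]
        exact Nat.mod_mod_of_dvd _ dvd_rfl
      rw [h1]
      exact getElem_eq_getElem t hmod _
    have hwrapval : s(zs0.getLast h0ne, zs0.head h0ne) = s(u, v) := by
      rw [List.getLast_eq_getElem, List.head_eq_getElem, hlast0, h00]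
      exact he.symm
    have hcpE : ∀ e ∈ cyclicPairs zs0, e ∈ (G ⊔ SimpleGraph.edge u v).edgeSet :=
      fun e hee => hGprime e (hcp0.mem_iff.mp hee)
    have hnd2 := hcpnd
    rw [cyclicPairs_eq zs0 h0ne, hwrapval] at hnd2
    have hwrapnot : s(u, v) ∉ pairs zs0 := by
      intro hmem
      rcases List.nodup_append'.mp hnd2 with ⟨-, -, hdisj⟩
      exact hdisj hmem (List.mem_singleton.mpr rfl)
    have hpairsG : ∀ e ∈ pairs zs0, e ∈ G.edgeSet := by
      intro e hee
      have h1 : e ∈ cyclicPairs zs0 := by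
        rw [cyclicPairs_eq zs0 h0ne]; exact List.mem_append_left _ hee
      have h2 := hcpE e h1
      rw [SimpleGraph.edgeSet_sup, SimpleGraph.edge_edgeSet_of_ne hne] at h2
      rcases h2 with h2 | h2
      · exact h2
      · rw [Set.mem_singleton_iff] at h2
        exact absurd (h2 ▸ hee) hwrapnot
    have hchz0 : zs0.Chain' G.Adj := chain'_of_pairs hpairsG
    have hFzs0 : ∀ e ∈ F.edgeSet, e ∈ pairs zs0 := by
      intro e hee
      have h1 : e ∈ cyclicPairs zs0 := hcp0.mem_iff.mpr (hCP.mem_iff.mpr (hFc e hee))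
      rw [cyclicPairs_eq zs0 h0ne] at h1
      rcases List.mem_append.mp h1 with h1 | h1
      · exact h1
      · exfalso
        rw [List.mem_singleton] at h1
        rw [hwrapval] at h1
        exact hFedge e hee h1
    simp only [Sym2.eq, Sym2.rel_iff', Prod.mk.injEq, Prod.swap_prod_mk] at he
    rcases he with ⟨h1, h2⟩ | ⟨h1, h2⟩
    · obtain ⟨zs, p1, p2, p3, p4, p5, p6⟩ :=
        surgery (G := G) (u := u) (v := v) (F := F) zs0 h0nd h0all (by omega) hchz0
          (by rw [h00]; exact h2.symm) (by rw [hlast0]; exact h1.symm)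
          hne hnadj hFcard hFzs0 (by omega)
      exact hfinal zs p1 p2 p3 p4 p5 p6
    · obtain ⟨zs, p1, p2, p3, p4, p5, p6⟩ :=
        surgery (G := G) (u := v) (v := u) (F := F) zs0 h0nd h0all (by omega) hchz0
          (by rw [h00]; exact h1.symm) (by rw [hlast0]; exact h2.symm)
          hne.symm (fun h => hnadj h.symm) hFcard hFzs0 (by omega)
      exact hfinal zs p1 p2 p3 p4 p5 p6
  · -- the cycle avoids the new edge
    apply hfinal t htnd htall (by omega)
    · exact chain'_of_pairs (fun e he => hsplit e
        (by rw [cyclicPairs_eq t htne]; exact List.mem_append_left _ he)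
        (fun h => huv (h ▸ (by rw [cyclicPairs_eq t htne]; exact List.mem_append_left _ he))))
    · intro hz
      have hwrapmem : s(t.getLast hz, t.head hz) ∈ cyclicPairs t := by
        rw [cyclicPairs_eq t hz]
        exact List.mem_append_right _ (List.mem_singleton.mpr rfl)
      have := hsplit _ hwrapmem (fun h => huv (h ▸ hwrapmem))
      rwa [SimpleGraph.mem_edgeSet] at this
    · intro e he
      exact hCP.mem_iff.mpr (hFc e he)
end
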